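/- The canonical disjunctive database for the two-key database family D_n (conflict edges {t_{i1},t_{j1}} for i≠j, {t_{i1},t_{i2}}, {t_{i2},t_{i3}}) has size exactly 2n + (n+1)·n·2^{n-1}: it contains n disjunctions of 2 facts each and n·2^{n-1} disjunctions of n+1 facts each. -/
import Mathlib


variable {F : Type*} [DecidableEq F]

/-- M is a model of the disjunctive database D: it meets every disjunction. -/
def IsModel (D : Finset (Finset F)) (M : Finset F) : Prop :=
  ∀ d ∈ D, ∃ t ∈ d, t ∈ M

/-- M is a minimal model of D. -/
def IsMinModel (D : Finset (Finset F)) (M : Finset F) : Prop :=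
  IsModel D M ∧ ∀ M' ⊂ M, ¬ IsModel D M'

/-- reduction removes every disjunction properly containing another disjunction of D. -/
def reduction (D : Finset (Finset F)) : Finset (Finset F) :=
  D.filter (fun d => ∀ d' ∈ D, ¬ d' ⊂ d)

/-- S is conflict-free w.r.t. a binary conflict relation G. -/
def ConflictFree (G : F → F → Prop) (S : Finset F) : Prop :=
  ∀ a ∈ S, ∀ b ∈ S, ¬ G a b

/-- S is a repair of V w.r.t. conflict relation G: a maximal conflict-free subset of V. -/
def IsRepairC (V : Finset F) (G : F → F → Prop) (S : Finset F) : Prop :=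
  S ⊆ V ∧ ConflictFree G S ∧ ∀ S', S ⊂ S' → S' ⊆ V → ¬ ConflictFree G S'

/-- Conflict relation of the family D_n: facts are (i,k) with k=0,1,2 encoding
    t_{i1}, t_{i2}, t_{i3}. Edges: {t_{i1},t_{j1}} for i≠j, {t_{i1},t_{i2}}, {t_{i2},t_{i3}}. -/
def ConfDn (n : ℕ) (a b : Fin n × Fin 3) : Prop :=
  (a.2 = 0 ∧ b.2 = 0 ∧ a.1 ≠ b.1) ∨
  (a.1 = b.1 ∧ ((a.2 = 0 ∧ b.2 = 1) ∨ (a.2 = 1 ∧ b.2 = 0) ∨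
                (a.2 = 1 ∧ b.2 = 2) ∨ (a.2 = 2 ∧ b.2 = 1)))

/-- The repair {t_{12},...,t_{n2}}. -/
def repA (n : ℕ) : Finset (Fin n × Fin 3) :=
  Finset.univ.image (fun i => (i, (1 : Fin 3)))

/-- The repair {t_{i1}, t_{i3}} ∪ { (j, f j) : j ≠ i } (for f choosing among t_{j2}, t_{j3}). -/
def repB (n : ℕ) (i : Fin n) (f : Fin n → Fin 3) : Finset (Fin n × Fin 3) :=
  insert (i, (0 : Fin 3)) (insert (i, (2 : Fin 3))
    ((Finset.univ.erase i).image (fun j => (j, f j))))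

/-- The disjunctions t_{i2} ∨ t_{i3}. -/
def DnD1 (n : ℕ) : Finset (Finset (Fin n × Fin 3)) :=
  Finset.univ.image (fun i : Fin n => ({(i, (1 : Fin 3)), (i, (2 : Fin 3))} : Finset (Fin n × Fin 3)))

/-- The disjunctions t_{i1} ∨ t_{i2} ∨ ⋁_{z ≠ i} t_z with t_z ∈ {t_{z1}, t_{z3}}. -/
def DnD2 (n : ℕ) : Finset (Finset (Fin n × Fin 3)) :=
  Finset.univ.image (fun p : Fin n × (Fin n → Bool) =>
    insert (p.1, (0 : Fin 3)) (insert (p.1, (1 : Fin 3))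
      ((Finset.univ.erase p.1).image
        (fun z => (z, if p.2 z then (0 : Fin 3) else (2 : Fin 3))))))

/-- The disjunctions t_1 ∨ ... ∨ t_n with t_i ∈ {t_{i1}, t_{i3}}. -/
def DnD3 (n : ℕ) : Finset (Finset (Fin n × Fin 3)) :=
  Finset.univ.image (fun g : Fin n → Bool =>
    Finset.univ.image (fun i : Fin n => (i, if g i then (0 : Fin 3) else (2 : Fin 3))))

open Finset

def phiD (n : ℕ) (p : Fin n × (Fin n → Bool)) : Finset (Fin n × Fin 3) :=
  insert (p.1, (0 : Fin 3)) (insert (p.1, (1 : Fin 3))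
    ((Finset.univ.erase p.1).image
      (fun z => (z, if p.2 z then (0 : Fin 3) else (2 : Fin 3)))))


lemma DnD2_eq (n : ℕ) : DnD2 n = Finset.univ.image (phiD n) := rfl

lemma card_fix (n : ℕ) (i : Fin n) :
    ((Finset.univ : Finset (Fin n → Bool)).filter (fun f => f i = false)).card = 2 ^ (n - 1) := by
  rw [← Fintype.card_subtype (fun f : Fin n → Bool => f i = false)]
  have e : {f : Fin n → Bool // f i = false} ≃ ({j : Fin n // j ≠ i} → Bool) :=
    { toFun := fun f j => f.1 j.1
      invFun := fun g => ⟨fun j => if h : j = i then false else g ⟨j, h⟩, by simp⟩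
      left_inv := by
        rintro ⟨f, hf⟩
        ext j
        by_cases h : j = i
        · subst h; simp [hf]
        · simp [h]
      right_inv := by
        intro g
        funext j
        simp [j.2] }
  rw [Fintype.card_congr e]
  have : Fintype.card {j : Fin n // j ≠ i} = n - 1 := by
    simp [Fintype.card_subtype_compl (fun j : Fin n => j = i)]
  simp [this]

lemma mem_phiD {n : ℕ} {p : Fin n × (Fin n → Bool)} {t : Fin n × Fin 3} :
    t ∈ phiD n p ↔ t = (p.1, 0) ∨ t = (p.1, 1) ∨
      (t.1 ≠ p.1 ∧ t = (t.1, if p.2 t.1 then (0 : Fin 3) else 2)) := by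
  simp only [phiD, mem_insert, mem_image, mem_erase, mem_univ, and_true]
  constructor
  · rintro (h | h | ⟨z, hz, rfl⟩)
    · exact Or.inl h
    · exact Or.inr (Or.inl h)
    · exact Or.inr (Or.inr ⟨hz, rfl⟩)
  · rintro (h | h | ⟨hz, h⟩)
    · exact Or.inl h
    · exact Or.inr (Or.inl h)
    · exact Or.inr (Or.inr ⟨t.1, hz, h.symm⟩)

lemma phiD_norm {n : ℕ} (p : Fin n × (Fin n → Bool)) :
    phiD n p = phiD n (p.1, Function.update p.2 p.1 false) := by
  unfold phiD
  congr 2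
  apply Finset.image_congr
  intro z hz
  simp only [mem_coe, mem_erase] at hz
  simp [Function.update_of_ne hz.1]

lemma phiD_injOn {n : ℕ} :
    Set.InjOn (phiD n) ((Finset.univ : Finset (Fin n × (Fin n → Bool))).filter
      (fun p => p.2 p.1 = false)) := by
  rintro ⟨i, f⟩ hp ⟨j, g⟩ hq h
  simp only [coe_filter, Set.mem_setOf_eq] at hp hq
  have h1 : ((i, (1 : Fin 3)) : Fin n × Fin 3) ∈ phiD n (j, g) := by
    rw [← h]; exact mem_phiD.mpr (Or.inr (Or.inl rfl))
  rw [mem_phiD] at h1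
  have hij : i = j := by
    rcases h1 with h1 | h1 | ⟨hne, h1⟩
    · exact absurd h1 (by simp)
    · exact congrArg Prod.fst h1
    · exfalso
      have h2 := congrArg Prod.snd h1
      simp only at h2
      cases hgi : g i <;> simp [hgi] at h2
  subst hij
  have hfg : f = g := by
    funext z
    by_cases hz : z = i
    · subst hz; rw [hp.2, hq.2]
    · have h2 : ((z, if f z then (0 : Fin 3) else 2) : Fin n × Fin 3) ∈ phiD n (i, g) := by
        rw [← h]; exact mem_phiD.mpr (Or.inr (Or.inr ⟨hz, rfl⟩))
      rw [mem_phiD] at h2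
      rcases h2 with h2 | h2 | ⟨_, h2⟩
      · exfalso; apply hz; exact congrArg Prod.fst h2
      · exfalso; apply hz; exact congrArg Prod.fst h2
      · simp only at h2
        have := congrArg Prod.snd h2
        simp only at this
        cases hf : f z <;> cases hg : g z <;> simp_all
  simp [hfg]

lemma DnD2_card (n : ℕ) : (DnD2 n).card = n * 2 ^ (n - 1) := by
  have himg : DnD2 n = ((Finset.univ : Finset (Fin n × (Fin n → Bool))).filter
      (fun p => p.2 p.1 = false)).image (phiD n) := by
    rw [DnD2_eq]
    apply Finset.Subset.antisymm
    · intro d hd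
      simp only [mem_image, mem_univ, true_and] at hd
      obtain ⟨p, rfl⟩ := hd
      refine mem_image.mpr ⟨(p.1, Function.update p.2 p.1 false), ?_, (phiD_norm p).symm⟩
      simp
    · exact Finset.image_subset_image (Finset.filter_subset _ _)
  rw [himg, Finset.card_image_of_injOn phiD_injOn]
  rw [Finset.card_filter, Fintype.sum_prod_type]
  have : ∀ i : Fin n, (∑ f : Fin n → Bool, if f i = false then 1 else 0) = 2 ^ (n - 1) := by
    intro i
    rw [← card_fix n i, Finset.card_filter]
  simp only [this, Finset.sum_const, card_univ, Fintype.card_fin, smul_eq_mul]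

lemma phiD_card {n : ℕ} (p : Fin n × (Fin n → Bool)) : (phiD n p).card = n + 1 := by
  have hn : 0 < n := p.1.pos
  unfold phiD
  rw [Finset.card_insert_of_notMem, Finset.card_insert_of_notMem,
    Finset.card_image_of_injective _ (fun a b h => (Prod.mk.injEq _ _ _ _ ▸ h).1 ▸ congrArg Prod.fst h),
    Finset.card_erase_of_mem (mem_univ _), card_univ, Fintype.card_fin]
  · omega
  · simp only [mem_image, mem_erase]
    rintro ⟨z, ⟨hz, _⟩, h⟩
    exact hz (congrArg Prod.fst h)
  · simp only [mem_insert, mem_image, mem_erase, Prod.mk.injEq, not_or]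
    constructor
    · intro h; exact absurd h.2 (by decide)
    · rintro ⟨z, ⟨hz, _⟩, h, _⟩; exact hz h

theorem stmt14 (n : ℕ) :
    (DnD1 n).card = n
    ∧ (∀ d ∈ DnD1 n, d.card = 2)
    ∧ (DnD2 n).card = n * 2 ^ (n - 1)
    ∧ (∀ d ∈ DnD2 n, d.card = n + 1)
    ∧ (∑ d ∈ DnD1 n ∪ DnD2 n, d.card) = 2 * n + (n + 1) * (n * 2 ^ (n - 1)) := by
  have h1 : (DnD1 n).card = n := by
    unfold DnD1
    rw [Finset.card_image_of_injective, card_univ, Fintype.card_fin]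
    intro a b h
    have h' : ({(a, (1 : Fin 3)), (a, (2 : Fin 3))} : Finset (Fin n × Fin 3)) =
        {(b, (1 : Fin 3)), (b, (2 : Fin 3))} := h
    have : ((a, (1 : Fin 3)) : Fin n × Fin 3) ∈ ({(b, (1 : Fin 3)), (b, (2 : Fin 3))} : Finset _) := by
      rw [← h']; simp
    simp only [mem_insert, mem_singleton, Prod.mk.injEq] at this
    rcases this with ⟨h', _⟩ | ⟨_, h'⟩
    · exact h'
    · exact absurd h' (by decide)
  have h2 : ∀ d ∈ DnD1 n, d.card = 2 := by
    intro d hd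
    simp only [DnD1, mem_image, mem_univ, true_and] at hd
    obtain ⟨i, rfl⟩ := hd
    rw [Finset.card_insert_of_notMem (by simp), Finset.card_singleton]
  have h3 := DnD2_card n
  have h4 : ∀ d ∈ DnD2 n, d.card = n + 1 := by
    intro d hd
    rw [DnD2_eq] at hd
    simp only [mem_image, mem_univ, true_and] at hd
    obtain ⟨p, rfl⟩ := hd
    exact phiD_card p
  refine ⟨h1, h2, h3, h4, ?_⟩
  have hdisj : Disjoint (DnD1 n) (DnD2 n) := by
    rw [Finset.disjoint_left]
    intro d hd1 hd2
    simp only [DnD1, mem_image, mem_univ, true_and] at hd1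
    obtain ⟨i, rfl⟩ := hd1
    rw [DnD2_eq] at hd2
    simp only [mem_image, mem_univ, true_and] at hd2
    obtain ⟨p, hp⟩ := hd2
    have : ((p.1, (0 : Fin 3)) : Fin n × Fin 3) ∈
        ({(i, (1 : Fin 3)), (i, (2 : Fin 3))} : Finset (Fin n × Fin 3)) := by
      rw [← hp]; exact mem_phiD.mpr (Or.inl rfl)
    simp only [mem_insert, mem_singleton, Prod.mk.injEq] at this
    rcases this with ⟨_, h'⟩ | ⟨_, h'⟩ <;> exact absurd h' (by decide)
  rw [Finset.sum_union hdisj,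
    Finset.sum_congr rfl h2, Finset.sum_congr rfl h4,
    Finset.sum_const, Finset.sum_const, h1, h3, smul_eq_mul, smul_eq_mul]
  ring
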